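/- Let k ∈ {1,2,3,4} and p ∈ (0,1) with F_k(p) ≥ 0 and 2(p−1)(p−2)k − p³ ≠ 0. Define a^±_{p,k} = (±√(F_k(p)) + 2(p−1)k − p(p−2)) / (2(2(p−1)(p−2)k − p³)), b^±_{p,k} = ±√(F_k(p)) / (k(2(p−1)(p−2)k − p³)), c^±_{p,k} = (1/4)(1 + (p−2)k·b^±_{p,k} − 2p·a^±_{p,k}), and f^±_{p,k}(x₁,x₂) = a^±_{p,k}·x₁ + b^±_{p,k}·x₂ + c^±_{p,k}. Let s₁ = (0,0), s₂ = (p,0), s₃ = (p,(1−p)k), s₄ = (0,k) be the vertices of Δ_{p,k} in cyclic order. If f^±_{p,k}(s_i) ≠ 0 for i = 1,2,3,4, then for each choice of sign, 1/f^±_{p,k}(s₁) − 1/f^±_{p,k}(s₂) + 1/f^±_{p,k}(s₃) − 1/f^±_{p,k}(s₄) = 0. (This is the equipoised condition for the f^±_{p,k}-twist of Δ_{p,k}.) -/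

import Mathlib

/-- The quartic F_k(p) = 4(1−p)²k² − 4(p−1)(p−2)pk + p⁴ attached to the
k-th Hirzebruch surface. -/
def FkQuartic (k : ℕ) (p : ℝ) : ℝ :=
  4 * (1 - p) ^ 2 * (k : ℝ) ^ 2 - 4 * (p - 1) * (p - 2) * p * (k : ℝ) + p ^ 4

set_option maxHeartbeats 4000000 in
/-- The equipoised condition for the f^±_{p,k}-twist of Δ_{p,k}:
with the Futaki–Ono affine linear function f^±_{p,k} = a x₁ + b x₂ + c and the
vertices s₁ = (0,0), s₂ = (p,0), s₃ = (p,(1−p)k), s₄ = (0,k) of Δ_{p,k} in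
cyclic order, if f^±_{p,k}(sᵢ) ≠ 0 for all i then
1/f(s₁) − 1/f(s₂) + 1/f(s₃) − 1/f(s₄) = 0. -/
theorem stmt17 (k : ℕ) (hk : k ∈ ({1, 2, 3, 4} : Set ℕ))
    (p : ℝ) (hp : 0 < p) (hp1 : p < 1)
    (hF : 0 ≤ FkQuartic k p)
    (hden : 2 * (p - 1) * (p - 2) * (k : ℝ) - p ^ 3 ≠ 0)
    (ε : ℝ) (hε : ε = 1 ∨ ε = -1)
    (a b c : ℝ)
    (ha : a = (ε * Real.sqrt (FkQuartic k p) + 2 * (p - 1) * (k : ℝ) - p * (p - 2)) /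
        (2 * (2 * (p - 1) * (p - 2) * (k : ℝ) - p ^ 3)))
    (hb : b = ε * Real.sqrt (FkQuartic k p) /
        ((k : ℝ) * (2 * (p - 1) * (p - 2) * (k : ℝ) - p ^ 3)))
    (hc : c = (1 / 4) * (1 + (p - 2) * (k : ℝ) * b - 2 * p * a))
    (f : ℝ × ℝ → ℝ) (hf : ∀ x, f x = a * x.1 + b * x.2 + c)
    (h1 : f (0, 0) ≠ 0) (h2 : f (p, 0) ≠ 0)
    (h3 : f (p, (1 - p) * (k : ℝ)) ≠ 0) (h4 : f (0, (k : ℝ)) ≠ 0) :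
    1 / f (0, 0) - 1 / f (p, 0) + 1 / f (p, (1 - p) * (k : ℝ)) - 1 / f (0, (k : ℝ)) = 0 := by
  have hK : (k : ℝ) ≠ 0 := by
    simp only [Set.mem_insert_iff, Set.mem_singleton_iff] at hk
    rcases hk with h|h|h|h <;> subst h <;> norm_num
  have hs : Real.sqrt (FkQuartic k p) ^ 2 = FkQuartic k p := Real.sq_sqrt hF
  have he : ε ^ 2 = 1 := by rcases hε with h|h <;> rw [h] <;> norm_num
  set s := Real.sqrt (FkQuartic k p) with hsdef
  set K := (k : ℝ) with hKdef
  have hFx : FkQuartic k p = 4 * (1 - p) ^ 2 * K ^ 2 - 4 * (p - 1) * (p - 2) * p * K + p ^ 4 := rfl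
  have hCD : (4*K*(2*(p-1)*(p-2)*K - p^3)) ≠ 0 := by
    apply mul_ne_zero (by positivity) hden
  have e1 : f (0 : ℝ × ℝ) * (4*K*(2*(p-1)*(p-2)*K - p^3)) = ((-2)*K*s*ε + (4)*K^2 + (-4)*p*K^2 + (-2)*p^2*K) := by
    simp only [hf, Prod.fst_zero, Prod.snd_zero]; rw [hc, ha, hb]; field_simp [show 2*(p-1)*K*(p-2) - p^3 ≠ 0 by convert hden using 1; ring]; ring
  have e2 : f (p, (0:ℝ)) * (4*K*(2*(p-1)*(p-2)*K - p^3)) = ((-2)*K*s*ε + (4)*K^2 + (2)*p*K*s*ε + (-8)*p*K^2 + (2)*p^2*K + (4)*p^2*K^2 + (-2)*p^3*K) := by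
    simp only [hf]; rw [hc, ha, hb]; field_simp [show 2*(p-1)*K*(p-2) - p^3 ≠ 0 by convert hden using 1; ring]; ring
  have e3 : f (p, (1-p)*K) * (4*K*(2*(p-1)*(p-2)*K - p^3)) = ((2)*K*s*ε + (4)*K^2 + (-2)*p*K*s*ε + (-8)*p*K^2 + (2)*p^2*K + (4)*p^2*K^2 + (-2)*p^3*K) := by
    simp only [hf]; rw [hc, ha, hb]; field_simp [show 2*(p-1)*K*(p-2) - p^3 ≠ 0 by convert hden using 1; ring]; ring
  have e4 : f ((0:ℝ), K) * (4*K*(2*(p-1)*(p-2)*K - p^3)) = ((2)*K*s*ε + (4)*K^2 + (-4)*p*K^2 + (-2)*p^2*K) := by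
    simp only [hf]; rw [hc, ha, hb]; field_simp [show 2*(p-1)*K*(p-2) - p^3 ≠ 0 by convert hden using 1; ring]; ring
  have keyP : ((-2)*K*s*ε + (4)*K^2 + (2)*p*K*s*ε + (-8)*p*K^2 + (2)*p^2*K + (4)*p^2*K^2 + (-2)*p^3*K)*((2)*K*s*ε + (4)*K^2 + (-2)*p*K*s*ε + (-8)*p*K^2 + (2)*p^2*K + (4)*p^2*K^2 + (-2)*p^3*K)*((2)*K*s*ε + (4)*K^2 + (-4)*p*K^2 + (-2)*p^2*K) - ((-2)*K*s*ε + (4)*K^2 + (-4)*p*K^2 + (-2)*p^2*K)*((2)*K*s*ε + (4)*K^2 + (-2)*p*K*s*ε + (-8)*p*K^2 + (2)*p^2*K + (4)*p^2*K^2 + (-2)*p^3*K)*((2)*K*s*ε + (4)*K^2 + (-4)*p*K^2 + (-2)*p^2*K) + ((-2)*K*s*ε + (4)*K^2 + (-4)*p*K^2 + (-2)*p^2*K)*((-2)*K*s*ε + (4)*K^2 + (2)*p*K*s*ε + (-8)*p*K^2 + (2)*p^2*K + (4)*p^2*K^2 + (-2)*p^3*K)*((2)*K*s*ε + (4)*K^2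 + (-4)*p*K^2 + (-2)*p^2*K) - ((-2)*K*s*ε + (4)*K^2 + (-4)*p*K^2 + (-2)*p^2*K)*((-2)*K*s*ε + (4)*K^2 + (2)*p*K*s*ε + (-8)*p*K^2 + (2)*p^2*K + (4)*p^2*K^2 + (-2)*p^3*K)*((2)*K*s*ε + (4)*K^2 + (-2)*p*K*s*ε + (-8)*p*K^2 + (2)*p^2*K + (4)*p^2*K^2 + (-2)*p^3*K) = 0 := by
    rw [hFx] at hs
    linear_combination ((16)*p*K^3*s*ε^3 + (-16)*p^2*K^3*s*ε^3) * hs + ((64)*p*K^5*s*ε + (-128)*p^2*K^4*s*ε + (-192)*p^2*K^5*s*ε + (320)*p^3*K^4*s*ε + (192)*p^3*K^5*s*ε + (-256)*p^4*K^4*s*ε + (-64)*p^4*K^5*s*ε + (16)*p^5*K^3*s*ε + (64)*p^5*K^4*s*ε + (-16)*p^6*K^3*s*ε) * he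
  have key : f (p, (0:ℝ)) * (f (p, (1-p)*K) * f ((0:ℝ), K))
      - f (0 : ℝ × ℝ) * (f (p, (1-p)*K) * f ((0:ℝ), K))
      + f (0 : ℝ × ℝ) * (f (p, (0:ℝ)) * f ((0:ℝ), K))
      - f (0 : ℝ × ℝ) * (f (p, (0:ℝ)) * f (p, (1-p)*K)) = 0 := by
    refine mul_left_cancel₀ (pow_ne_zero 3 hCD) ?_
    linear_combination keyP + ((f (p, (1-p)*K) * (4*K*(2*(p-1)*(p-2)*K - p^3)))*(f ((0:ℝ), K) * (4*K*(2*(p-1)*(p-2)*K - p^3))))*e2 + (((-2)*K*s*ε + (4)*K^2 + (2)*p*K*s*ε + (-8)*p*K^2 + (2)*p^2*K + (4)*p^2*K^2 + (-2)*p^3*K)*(f ((0:ℝ), K) * (4*K*(2*(p-1)*(p-2)*K - p^3))))*e3 + (((-2)*K*s*ε + (4)*K^2 + (2)*p*K*s*ε + (-8)*p*K^2 + (2)*p^2*K + (4)*p^2*K^2 + (-2)*p^3*K)*((2)*K*s*ε + (4)*K^2 + (-2)*p*K*s*ε + (-8)*p*K^2 + (2)*p^2*K + (4)*p^2*K^2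 + (-2)*p^3*K))*e4
      - ((f (p, (1-p)*K) * (4*K*(2*(p-1)*(p-2)*K - p^3)))*(f ((0:ℝ), K) * (4*K*(2*(p-1)*(p-2)*K - p^3))))*e1 - (((-2)*K*s*ε + (4)*K^2 + (-4)*p*K^2 + (-2)*p^2*K)*(f ((0:ℝ), K) * (4*K*(2*(p-1)*(p-2)*K - p^3))))*e3 - (((-2)*K*s*ε + (4)*K^2 + (-4)*p*K^2 + (-2)*p^2*K)*((2)*K*s*ε + (4)*K^2 + (-2)*p*K*s*ε + (-8)*p*K^2 + (2)*p^2*K + (4)*p^2*K^2 + (-2)*p^3*K))*e4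
      + ((f (p, (0:ℝ)) * (4*K*(2*(p-1)*(p-2)*K - p^3)))*(f ((0:ℝ), K) * (4*K*(2*(p-1)*(p-2)*K - p^3))))*e1 + (((-2)*K*s*ε + (4)*K^2 + (-4)*p*K^2 + (-2)*p^2*K)*(f ((0:ℝ), K) * (4*K*(2*(p-1)*(p-2)*K - p^3))))*e2 + (((-2)*K*s*ε + (4)*K^2 + (-4)*p*K^2 + (-2)*p^2*K)*((-2)*K*s*ε + (4)*K^2 + (2)*p*K*s*ε + (-8)*p*K^2 + (2)*p^2*K + (4)*p^2*K^2 + (-2)*p^3*K))*e4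
      - ((f (p, (0:ℝ)) * (4*K*(2*(p-1)*(p-2)*K - p^3)))*(f (p, (1-p)*K) * (4*K*(2*(p-1)*(p-2)*K - p^3))))*e1 - (((-2)*K*s*ε + (4)*K^2 + (-4)*p*K^2 + (-2)*p^2*K)*(f (p, (1-p)*K) * (4*K*(2*(p-1)*(p-2)*K - p^3))))*e2 - (((-2)*K*s*ε + (4)*K^2 + (-4)*p*K^2 + (-2)*p^2*K)*((-2)*K*s*ε + (4)*K^2 + (2)*p*K*s*ε + (-8)*p*K^2 + (2)*p^2*K + (4)*p^2*K^2 + (-2)*p^3*K))*e3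
  have g1 : f (0, 0) = f (0 : ℝ × ℝ) := rfl
  have g2 : f (p, 0) = f (p, (0:ℝ)) := rfl
  have g3 : f (p, (1 - p) * K) = f (p, (1-p)*K) := rfl
  have g4 : f (0, K) = f ((0:ℝ), K) := rfl
  have h1' : f 0 ≠ 0 := h1
  rw [g1, g2, g3, g4]
  field_simp [h1', h2, h3, h4]
  linear_combination key
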